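/- arXiv:2406.10416 — 4 statements merged into one kernel-verified Lean document; each statement's English description precedes it below -/
import Mathlib

section
/- Let E be a finite-dimensional real inner product space (E = EuclideanSpace ℝ (Fin d)) and let F : E → ℝ be differentiable and L-smooth, bounded below, and let w* ∈ E be a point with F(w*) ≤ F(w) for all iterates considered (e.g. F(w*) = inf F). Fix real parameters with 0 < L, 0 ≤ α < 1, ψ > 0, ρ > 0, δ ≥ 0, γ > 0, a learning rate η with 0 < η ≤ 1/(4L), and γ ≤ ρ/(L·ψ·(1−α)). Let (Ω, 𝓕, P) be a probability space with a filtration (𝓕_t)_{t∈ℕ}, and let w⁰ ∈ E be deterministic. For each round t = 0, 1, …, T−1 suppose: (i) gᵗ : Ω → E is 𝓕_{t+1}-measurable and square-integrable with E[gᵗ | 𝓕_t] = ∇F(wᵗ) almost surely and E[‖gᵗ − ∇F(wᵗ)‖² | 𝓕_t] ≤ δ² almost surely; (ii) w^{t+½} = wᵗ − η gᵗ and almost surely ‖w^{t+½}‖ ≤ ψ and ‖∇F(wᵗ)‖ ≤ ρ; (iii) for a nonempty finite (random, 𝓕_{t+1}-measurable) index set S_t there are vectors w_j^{t+½} ∈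 E, j ∈ S_t, each satisfying ‖w^{t+½} − w_j^{t+½}‖ ≤ γ·exp(−c_t)·‖w^{t+½}‖ for some constant c_t ≥ 0; (iv) w^{t+1} = α·w^{t+½} + (1−α)·(1/|S_t|)·Σ_{j∈S_t} w_j^{t+½}, and F(w^{t+1}) is integrable. Then (1/T)·Σ_{t=0}^{T−1} E[‖∇F(wᵗ)‖²] ≤ 2(F(w⁰) − F(w*))/(ηT) + 4Lηδ² + 4γρψ(1−α)/η. -/
open MeasureTheory RealInnerProductSpace

section Helpers

variable {Ω : Type*} {m m0 : MeasurableSpace Ω} {μ : Measure Ω}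

lemma descent_lemma {d : ℕ} {F : EuclideanSpace ℝ (Fin d) → ℝ}
    {F' : EuclideanSpace ℝ (Fin d) → EuclideanSpace ℝ (Fin d)}
    (hdiff : ∀ x, HasGradientAt F (F' x) x) {L : ℝ} (hL : 0 ≤ L)
    (hsmooth : ∀ x y, ‖F' x - F' y‖ ≤ L * ‖x - y‖) (x y : EuclideanSpace ℝ (Fin d)) :
    F y ≤ F x + ⟪F' x, y - x⟫ + L / 2 * ‖y - x‖ ^ 2 := by
  set v := y - x with hv
  have hF'cont : Continuous F' := by
    have : LipschitzWith (Real.toNNReal L) F' := by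
      apply LipschitzWith.of_dist_le_mul
      intro a b
      rw [dist_eq_norm, dist_eq_norm]
      calc ‖F' a - F' b‖ ≤ L * ‖a - b‖ := hsmooth a b
        _ = (Real.toNNReal L : ℝ) * ‖a - b‖ := by rw [Real.coe_toNNReal L hL]
    exact this.continuous
  have hline : ∀ s : ℝ, HasDerivAt (fun s : ℝ => x + s • v) v s := by
    intro s
    simpa using ((hasDerivAt_id s).smul_const v).const_add x
  have hφ : ∀ s : ℝ, HasDerivAt (fun s => F (x + s • v)) ⟪F' (x + s • v), v⟫ s := by
    intro s
    have h1 := (hasGradientAt_iff_hasFDerivAt.mp (hdiff (x + s • v))).comp_hasDerivAt s (hline s)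
    simpa [Function.comp_def] using h1
  have hcont : Continuous fun s : ℝ => ⟪F' (x + s • v), v⟫ :=
    ((hF'cont.comp (by continuity)).inner continuous_const)
  have hFTC : ∫ s in (0:ℝ)..1, ⟪F' (x + s • v), v⟫ = F y - F x := by
    have := intervalIntegral.integral_eq_sub_of_hasDerivAt (f := fun s => F (x + s • v))
      (fun s _ => hφ s) (hcont.intervalIntegrable 0 1)
    simpa [hv] using this
  have hmono : ∫ s in (0:ℝ)..1, ⟪F' (x + s • v), v⟫ ≤
      ∫ s in (0:ℝ)..1, (⟪F' x, v⟫ + L * ‖v‖ ^ 2 * s) := by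
    apply intervalIntegral.integral_mono_on (by norm_num)
      (hcont.intervalIntegrable 0 1)
      ((continuous_const.add (continuous_const.mul continuous_id')).intervalIntegrable 0 1)
    intro s hs
    show ⟪F' (x + s • v), v⟫ ≤ ⟪F' x, v⟫ + L * ‖v‖ ^ 2 * s
    have h2 : ⟪F' (x + s • v), v⟫ = ⟪F' x, v⟫ + ⟪F' (x + s • v) - F' x, v⟫ := by
      rw [inner_sub_left]; ring
    rw [h2]
    have h3 : ⟪F' (x + s • v) - F' x, v⟫ ≤ ‖F' (x + s • v) - F' x‖ * ‖v‖ :=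
      real_inner_le_norm _ _
    have h4 : ‖F' (x + s • v) - F' x‖ ≤ L * ‖s • v‖ := by
      simpa using hsmooth (x + s • v) x
    have h5 : ‖s • v‖ = s * ‖v‖ := by
      rw [norm_smul, Real.norm_eq_abs, abs_of_nonneg hs.1]
    rw [h5] at h4
    have h6 : ‖F' (x + s • v) - F' x‖ * ‖v‖ ≤ L * s * ‖v‖ * ‖v‖ := by
      have := mul_le_mul_of_nonneg_right h4 (norm_nonneg v)
      nlinarith [this]
    nlinarith [h3, h6]
  have hval : ∫ s in (0:ℝ)..1, (⟪F' x, v⟫ + L * ‖v‖ ^ 2 * s) =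
      ⟪F' x, v⟫ + L / 2 * ‖v‖ ^ 2 := by
    rw [intervalIntegral.integral_add (f := fun _ => ⟪F' x, v⟫) (g := fun s => L * ‖v‖ ^ 2 * s) (intervalIntegrable_const)
      ((continuous_const.mul continuous_id').intervalIntegrable 0 1),
      intervalIntegral.integral_const_mul]
    simp [integral_id]
    ring
  rw [hFTC, hval] at hmono
  nlinarith [real_inner_le_norm (F' x) v, hmono]

lemma integrable_inner_of_memL2 {E : Type*} [NormedAddCommGroup E] [InnerProductSpace ℝ E]
    {f g : Ω → E} (hf : MemLp f 2 μ) (hg : MemLp g 2 μ) :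
    Integrable (fun ω => ⟪f ω, g ω⟫) μ := by
  have h := L2.integrable_inner (𝕜 := ℝ) (hf.toLp f) (hg.toLp g)
  refine h.congr ?_
  filter_upwards [hf.coeFn_toLp, hg.coeFn_toLp] with ω h1 h2
  rw [h1, h2]

lemma memL2_norm_sq_integrable {E : Type*} [NormedAddCommGroup E] [InnerProductSpace ℝ E]
    {f : Ω → E} (hf : MemLp f 2 μ) : Integrable (fun ω => ‖f ω‖ ^ 2) μ := by
  have h := integrable_inner_of_memL2 hf hf
  refine h.congr (Filter.Eventually.of_forall fun ω => ?_)
  simp only []; exact real_inner_self_eq_norm_sq _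

lemma condexp_clm [IsFiniteMeasure μ] (hm : m ≤ m0)
    {E : Type*} [NormedAddCommGroup E] [InnerProductSpace ℝ E] [CompleteSpace E]
    (T : E →L[ℝ] ℝ) {f : Ω → E} (hf : Integrable f μ) :
    (fun ω => T ((μ[f|m]) ω)) =ᵐ[μ] μ[fun ω => T (f ω)|m] := by
  have hTf : Integrable (fun ω => T (f ω)) μ := T.integrable_comp hf
  refine ae_eq_condExp_of_forall_setIntegral_eq hm hTf ?_ ?_ ?_
  · intro s _ _
    exact (T.integrable_comp integrable_condExp).integrableOn
  · intro s hs hμs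
    rw [T.integral_comp_comm integrable_condExp.integrableOn,
        T.integral_comp_comm hf.integrableOn,
        setIntegral_condExp hm hf hs]
  · exact T.continuous.comp_aestronglyMeasurable
      (StronglyMeasurable.aestronglyMeasurable stronglyMeasurable_condExp)

lemma integral_inner_condexp [IsProbabilityMeasure μ] (hm : m ≤ m0) {d : ℕ}
    {g h : Ω → EuclideanSpace ℝ (Fin d)}
    (hg : MemLp g 2 μ) (hh : MemLp h 2 μ)
    (hhm : AEStronglyMeasurable[m] h μ) (hhae : h =ᵐ[μ] μ[g|m]) :
    ∫ ω, ⟪h ω, g ω⟫ ∂μ = ∫ ω, ‖h ω‖ ^ 2 ∂μ := by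
  have hgi : ∀ i : Fin d, MemLp (fun ω => g ω i) 2 μ := by
    intro i
    exact (EuclideanSpace.proj (𝕜 := ℝ) i).comp_memLp' hg
  have hhi : ∀ i : Fin d, MemLp (fun ω => h ω i) 2 μ := by
    intro i
    exact (EuclideanSpace.proj (𝕜 := ℝ) i).comp_memLp' hh
  have hmul : ∀ i : Fin d, Integrable (fun ω => h ω i * g ω i) μ := by
    intro i
    have := integrable_inner_of_memL2 (hhi i) (hgi i)
    simpa [RCLike.inner_apply, mul_comm] using this
  have hmul2 : ∀ i : Fin d, Integrable (fun ω => h ω i * h ω i) μ := by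
    intro i
    have := integrable_inner_of_memL2 (hhi i) (hhi i)
    simpa [RCLike.inner_apply, sq] using this
  have key : ∀ i : Fin d, ∫ ω, h ω i * g ω i ∂μ = ∫ ω, h ω i * h ω i ∂μ := by
    intro i
    have hgiInt : Integrable (fun ω => g ω i) μ := (hgi i).integrable one_le_two
    have hhmi : AEStronglyMeasurable[m] (fun ω => h ω i) μ :=
      (EuclideanSpace.proj i).continuous.comp_aestronglyMeasurable hhm
    have e1 : μ[fun ω => h ω i * g ω i|m] =ᵐ[μ]
        (fun ω => h ω i) * μ[fun ω => g ω i|m] :=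
      condExp_mul_of_aestronglyMeasurable_left hhmi (hmul i) hgiInt
    have e2 : μ[fun ω => g ω i|m] =ᵐ[μ] fun ω => h ω i := by
      have hc := (condexp_clm hm (EuclideanSpace.proj (𝕜 := ℝ) i) (hg.integrable one_le_two)).symm
      refine hc.trans ?_
      filter_upwards [hhae] with ω hω
      simp [hω]
    calc ∫ ω, h ω i * g ω i ∂μ = ∫ ω, (μ[fun ω => h ω i * g ω i|m]) ω ∂μ :=
          (integral_condExp hm).symm
      _ = ∫ ω, h ω i * h ω i ∂μ := by
          refine integral_congr_ae (e1.trans ?_)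
          filter_upwards [e2] with ω hω
          simp only [Pi.mul_apply, hω]
  have expand : ∀ (u v : Ω → EuclideanSpace ℝ (Fin d)) (ω : Ω),
      ⟪u ω, v ω⟫ = ∑ i, u ω i * v ω i := by
    intro u v ω
    simp [PiLp.inner_apply, RCLike.inner_apply, mul_comm]
  calc ∫ ω, ⟪h ω, g ω⟫ ∂μ = ∫ ω, ∑ i, h ω i * g ω i ∂μ := by
        refine integral_congr_ae (Filter.Eventually.of_forall fun ω => expand h g ω)
    _ = ∑ i, ∫ ω, h ω i * g ω i ∂μ := integral_finset_sum _ fun i _ => hmul i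
    _ = ∑ i, ∫ ω, h ω i * h ω i ∂μ := by simp only [key]
    _ = ∫ ω, ∑ i, h ω i * h ω i ∂μ := (integral_finset_sum _ fun i _ => hmul2 i).symm
    _ = ∫ ω, ‖h ω‖ ^ 2 ∂μ := by
        refine integral_congr_ae (Filter.Eventually.of_forall fun ω => ?_)
        show ∑ i, h ω i * h ω i = ‖h ω‖ ^ 2
        rw [← expand h h ω]
        exact real_inner_self_eq_norm_sq _

end Helpers

set_option maxHeartbeats 1600000 in
/-- **Theorem 2 (BALANCE, non-convex setting).** -/
theorem balance_nonconvex
    {d : ℕ} {F : EuclideanSpace ℝ (Fin d) → ℝ}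
    {F' : EuclideanSpace ℝ (Fin d) → EuclideanSpace ℝ (Fin d)}
    (hdiff : ∀ x, HasGradientAt F (F' x) x)
    {L α ψ ρ δ γ η : ℝ}
    (hsmooth : ∀ x y, ‖F' x - F' y‖ ≤ L * ‖x - y‖)
    {wstar : EuclideanSpace ℝ (Fin d)} (hmin : ∀ x, F wstar ≤ F x)
    (hL : 0 < L) (hα0 : 0 ≤ α) (hα1 : α < 1)
    (hψ : 0 < ψ) (hρ : 0 < ρ) (hδ : 0 ≤ δ) (hγ : 0 < γ)
    (hη0 : 0 < η) (hη : η ≤ 1 / (4 * L))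
    (hγle : γ ≤ ρ / (L * ψ * (1 - α)))
    {Ω : Type*} {mΩ : MeasurableSpace Ω} {P : Measure Ω} [IsProbabilityMeasure P]
    (ℱ : Filtration ℕ mΩ)
    {ι : Type*} {T : ℕ}
    (w : ℕ → Ω → EuclideanSpace ℝ (Fin d)) (w0 : EuclideanSpace ℝ (Fin d))
    (hw0 : w 0 = fun _ => w0)
    (g : ℕ → Ω → EuclideanSpace ℝ (Fin d))
    (whalf : ℕ → Ω → EuclideanSpace ℝ (Fin d))
    (hwhalf : ∀ t ω, whalf t ω = w t ω - η • g t ω)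
    (c : ℕ → ℝ) (hc : ∀ t, 0 ≤ c t)
    (S : ℕ → Ω → Finset ι) (wj : ℕ → ι → Ω → EuclideanSpace ℝ (Fin d))
    (hgmeas : ∀ t < T, Measurable[ℱ (t + 1)] (g t))
    (hgL2 : ∀ t < T, MemLp (g t) 2 P)
    (hgmean : ∀ t < T, P[g t|ℱ t] =ᵐ[P] fun ω => F' (w t ω))
    (hgvar : ∀ t < T,
      ∀ᵐ ω ∂P, (P[fun ω' => ‖g t ω' - F' (w t ω')‖ ^ 2|ℱ t]) ω ≤ δ ^ 2)
    (hψbd : ∀ t < T, ∀ᵐ ω ∂P, ‖whalf t ω‖ ≤ ψ)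
    (hρbd : ∀ t < T, ∀ᵐ ω ∂P, ‖F' (w t ω)‖ ≤ ρ)
    (hSne : ∀ t < T, ∀ ω, (S t ω).Nonempty)
    (hSmeas : ∀ t < T, @Measurable Ω (Finset ι) (ℱ (t + 1)) ⊤ (S t))
    (haccept : ∀ t < T, ∀ ω, ∀ j ∈ S t ω,
      ‖whalf t ω - wj t j ω‖ ≤ γ * Real.exp (-c t) * ‖whalf t ω‖)
    (hupdate : ∀ t < T, ∀ ω, w (t + 1) ω =
      α • whalf t ω + (1 - α) • (((S t ω).card : ℝ)⁻¹ • ∑ j ∈ S t ω, wj t j ω))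
    (hint : ∀ t < T, Integrable (fun ω => F (w (t + 1) ω)) P) :
    (1 / (T : ℝ)) * ∑ t ∈ Finset.range T, ∫ ω, ‖F' (w t ω)‖ ^ 2 ∂P ≤
      2 * (F w0 - F wstar) / (η * T) + 4 * L * η * δ ^ 2
        + 4 * γ * ρ * ψ * (1 - α) / η := by
  have h1α : (0:ℝ) < 1 - α := by linarith
  rcases Nat.eq_zero_or_pos T with hT0 | hTpos
  · subst hT0
    simp only [Nat.cast_zero, Finset.range_zero, Finset.sum_empty, mul_zero, div_zero]
    have h1 : (0:ℝ) ≤ 4 * L * η * δ ^ 2 := by positivity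
    have h2 : (0:ℝ) ≤ 4 * γ * ρ * ψ * (1 - α) / η := by positivity
    linarith
  set B : ℝ := (1 - α) * γ * ψ with hBdef
  have hBpos : 0 < B := by positivity
  have hLB : L * B ≤ ρ := by
    have hD : (0:ℝ) < L * ψ * (1 - α) := by positivity
    have h1 := (le_div_iff₀ hD).mp hγle
    nlinarith [h1]
  have hLη : η * (4 * L) ≤ 1 := by
    have : (0:ℝ) < 4 * L := by positivity
    exact (le_div_iff₀ this).mp hη
  have hFint : ∀ t, t ≤ T → Integrable (fun ω => F (w t ω)) P := by
    intro t ht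
    match t with
    | 0 => rw [hw0]; exact integrable_const _
    | Nat.succ s => exact hint s (by omega)
  -- Per-round inequality
  have key : ∀ t, t < T → η / 2 * (∫ ω, ‖F' (w t ω)‖ ^ 2 ∂P) ≤
      ((∫ ω, F (w t ω) ∂P) - ∫ ω, F (w (t + 1) ω) ∂P) + (L * η ^ 2 * δ ^ 2 + 2 * (ρ * B)) := by
    intro t ht
    have hgm2 : MemLp (g t) 2 P := hgL2 t ht
    have hhae : (fun ω => F' (w t ω)) =ᵐ[P] P[g t|ℱ t] := (hgmean t ht).symm
    have hhm' : AEStronglyMeasurable[ℱ t] (fun ω => F' (w t ω)) P :=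
      (StronglyMeasurable.aestronglyMeasurable stronglyMeasurable_condExp).congr hhae.symm
    have hham : AEStronglyMeasurable (fun ω => F' (w t ω)) P :=
      ((stronglyMeasurable_condExp.mono (ℱ.le t)).aestronglyMeasurable).congr hhae.symm
    have hh2 : MemLp (fun ω => F' (w t ω)) 2 P := MemLp.of_bound hham ρ (hρbd t ht)
    have hinner : Integrable (fun ω => ⟪F' (w t ω), g t ω⟫) P :=
      integrable_inner_of_memL2 hh2 hgm2
    have hgsq : Integrable (fun ω => ‖g t ω‖ ^ 2) P := memL2_norm_sq_integrable hgm2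
    have hhsq : Integrable (fun ω => ‖F' (w t ω)‖ ^ 2) P := memL2_norm_sq_integrable hh2
    have hdiffsq : Integrable (fun ω => ‖g t ω - F' (w t ω)‖ ^ 2) P :=
      memL2_norm_sq_integrable (hgm2.sub hh2)
    have hcross : ∫ ω, ⟪F' (w t ω), g t ω⟫ ∂P = ∫ ω, ‖F' (w t ω)‖ ^ 2 ∂P :=
      integral_inner_condexp (ℱ.le t) hgm2 hh2 hhm' hhae
    have hvar : ∫ ω, ‖g t ω - F' (w t ω)‖ ^ 2 ∂P ≤ δ ^ 2 := by
      have h1 : ∫ ω, ‖g t ω - F' (w t ω)‖ ^ 2 ∂P =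
          ∫ ω, (P[fun ω' => ‖g t ω' - F' (w t ω')‖ ^ 2|ℱ t]) ω ∂P :=
        (integral_condExp (ℱ.le t)).symm
      rw [h1]
      calc ∫ ω, (P[fun ω' => ‖g t ω' - F' (w t ω')‖ ^ 2|ℱ t]) ω ∂P
          ≤ ∫ _ω, δ ^ 2 ∂P :=
            integral_mono_ae integrable_condExp (integrable_const _) (hgvar t ht)
        _ = δ ^ 2 := by simp
    have hsecond : ∫ ω, ‖g t ω‖ ^ 2 ∂P ≤ ∫ ω, ‖F' (w t ω)‖ ^ 2 ∂P + δ ^ 2 := by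
      have hpt : ∀ ω, ‖g t ω‖ ^ 2 =
          ‖g t ω - F' (w t ω)‖ ^ 2 + 2 * ⟪F' (w t ω), g t ω⟫ - ‖F' (w t ω)‖ ^ 2 := by
        intro ω
        have e1 := norm_add_sq_real (g t ω - F' (w t ω)) (F' (w t ω))
        have e2 : g t ω - F' (w t ω) + F' (w t ω) = g t ω := by abel
        rw [e2] at e1
        have e3 : ⟪g t ω - F' (w t ω), F' (w t ω)⟫ =
            ⟪F' (w t ω), g t ω⟫ - ‖F' (w t ω)‖ ^ 2 := by
          rw [inner_sub_left, real_inner_self_eq_norm_sq, real_inner_comm]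
        rw [e3] at e1
        linarith
      have hc2 : Integrable (fun ω => 2 * ⟪F' (w t ω), g t ω⟫) P := hinner.const_mul 2
      have hc3 : Integrable
          (fun ω => ‖g t ω - F' (w t ω)‖ ^ 2 + 2 * ⟪F' (w t ω), g t ω⟫) P := hdiffsq.add hc2
      have hspl : ∫ ω, ‖g t ω‖ ^ 2 ∂P =
          (∫ ω, ‖g t ω - F' (w t ω)‖ ^ 2 ∂P) + 2 * (∫ ω, ⟪F' (w t ω), g t ω⟫ ∂P)
            - ∫ ω, ‖F' (w t ω)‖ ^ 2 ∂P := by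
        calc ∫ ω, ‖g t ω‖ ^ 2 ∂P
            = ∫ ω, (‖g t ω - F' (w t ω)‖ ^ 2 + 2 * ⟪F' (w t ω), g t ω⟫
                - ‖F' (w t ω)‖ ^ 2) ∂P :=
              integral_congr_ae (Filter.Eventually.of_forall fun ω => hpt ω)
          _ = (∫ ω, ‖g t ω - F' (w t ω)‖ ^ 2 ∂P) + 2 * (∫ ω, ⟪F' (w t ω), g t ω⟫ ∂P)
                - ∫ ω, ‖F' (w t ω)‖ ^ 2 ∂P := by
              rw [integral_sub hc3 hhsq, integral_add hdiffsq hc2, integral_const_mul]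
      rw [hspl, hcross]
      linarith [hvar]
    -- pointwise a.e. descent inequality
    have hptw : ∀ᵐ ω ∂P, F (w (t + 1) ω) ≤
        F (w t ω) - η * ⟪F' (w t ω), g t ω⟫ + L * η ^ 2 * ‖g t ω‖ ^ 2 + (ρ * B + L * B ^ 2) := by
      filter_upwards [hψbd t ht, hρbd t ht] with ω hψω hρω
      have hcard : (0:ℝ) < ((S t ω).card : ℝ) := by
        exact_mod_cast Finset.card_pos.mpr (hSne t ht ω)
      set M : ℝ := γ * Real.exp (-c t) * ‖whalf t ω‖ with hMdef
      have hMnn : 0 ≤ M := by positivity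
      have hMB : (1 - α) * M ≤ B := by
        have hexp1 : Real.exp (-c t) ≤ 1 := Real.exp_le_one_iff.mpr (by linarith [hc t])
        have hexp0 : (0:ℝ) < Real.exp (-c t) := Real.exp_pos _
        have hstep : γ * Real.exp (-c t) * ‖whalf t ω‖ ≤ γ * 1 * ψ :=
          mul_le_mul (mul_le_mul le_rfl hexp1 hexp0.le hγ.le) hψω (norm_nonneg _)
            (by positivity)
        rw [hBdef, hMdef]
        nlinarith [mul_le_mul_of_nonneg_left hstep h1α.le]
      have hesum : w (t + 1) ω - whalf t ω =
          (1 - α) • (((S t ω).card : ℝ)⁻¹ • ∑ j ∈ S t ω, (wj t j ω - whalf t ω)) := by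
        rw [hupdate t ht ω]
        have hsum : ∑ j ∈ S t ω, (wj t j ω - whalf t ω) =
            (∑ j ∈ S t ω, wj t j ω) - ((S t ω).card : ℝ) • whalf t ω := by
          rw [Finset.sum_sub_distrib, Finset.sum_const, ← Nat.cast_smul_eq_nsmul ℝ]
        have hw : (((S t ω).card : ℝ))⁻¹ • (((S t ω).card : ℝ)) • whalf t ω = whalf t ω := by
          rw [smul_smul, inv_mul_cancel₀ (ne_of_gt hcard), one_smul]
        rw [hsum, smul_sub (((S t ω).card : ℝ))⁻¹ (∑ j ∈ S t ω, wj t j ω)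
          ((((S t ω).card : ℝ)) • whalf t ω), hw]
        module
      have hebound : ‖w (t + 1) ω - whalf t ω‖ ≤ B := by
        rw [hesum, norm_smul, norm_smul]
        have hSsum : ‖∑ j ∈ S t ω, (wj t j ω - whalf t ω)‖ ≤ ((S t ω).card : ℝ) * M := by
          calc ‖∑ j ∈ S t ω, (wj t j ω - whalf t ω)‖
              ≤ ∑ j ∈ S t ω, ‖wj t j ω - whalf t ω‖ := norm_sum_le _ _
            _ ≤ (S t ω).card • M := by
                apply Finset.sum_le_card_nsmul
                intro j hj
                rw [norm_sub_rev]
                exact haccept t ht ω j hj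
            _ = ((S t ω).card : ℝ) * M := by rw [nsmul_eq_mul]
        have h1 : ‖(1 - α : ℝ)‖ = 1 - α := by rw [Real.norm_eq_abs, abs_of_pos h1α]
        have h2 : ‖(((S t ω).card : ℝ))⁻¹‖ = (((S t ω).card : ℝ))⁻¹ := by
          rw [Real.norm_eq_abs, abs_of_pos (by positivity)]
        rw [h1, h2]
        have h3 : (((S t ω).card : ℝ))⁻¹ * ‖∑ j ∈ S t ω, (wj t j ω - whalf t ω)‖ ≤ M := by
          rw [inv_mul_le_iff₀ hcard]
          linarith [hSsum]
        calc (1 - α) * ((((S t ω).card : ℝ))⁻¹ * ‖∑ j ∈ S t ω, (wj t j ω - whalf t ω)‖)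
            ≤ (1 - α) * M := by
              exact mul_le_mul_of_nonneg_left h3 h1α.le
          _ ≤ B := hMB
      have hdes := descent_lemma hdiff hL.le hsmooth (w t ω) (w (t + 1) ω)
      have hΔ : w (t + 1) ω - w t ω = (w (t + 1) ω - whalf t ω) - η • g t ω := by
        rw [hwhalf t ω]
        abel
      have hi1 : ⟪F' (w t ω), w (t + 1) ω - w t ω⟫ =
          ⟪F' (w t ω), w (t + 1) ω - whalf t ω⟫ - η * ⟪F' (w t ω), g t ω⟫ := by
        rw [hΔ, inner_sub_right, real_inner_smul_right]
      have hi2 : ⟪F' (w t ω), w (t + 1) ω - whalf t ω⟫ ≤ ρ * B := by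
        calc ⟪F' (w t ω), w (t + 1) ω - whalf t ω⟫
            ≤ ‖F' (w t ω)‖ * ‖w (t + 1) ω - whalf t ω‖ := real_inner_le_norm _ _
          _ ≤ ρ * B := mul_le_mul hρω hebound (norm_nonneg _) hρ.le
      have hn : ‖w (t + 1) ω - w t ω‖ ≤ η * ‖g t ω‖ + B := by
        rw [hΔ]
        calc ‖(w (t + 1) ω - whalf t ω) - η • g t ω‖
            ≤ ‖w (t + 1) ω - whalf t ω‖ + ‖η • g t ω‖ := norm_sub_le _ _
          _ ≤ B + η * ‖g t ω‖ := by
              rw [norm_smul, Real.norm_eq_abs, abs_of_pos hη0]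
              linarith [hebound]
          _ = η * ‖g t ω‖ + B := by ring
      have hnsq : ‖w (t + 1) ω - w t ω‖ ^ 2 ≤ 2 * η ^ 2 * ‖g t ω‖ ^ 2 + 2 * B ^ 2 := by
        nlinarith [hn, norm_nonneg (w (t + 1) ω - w t ω), norm_nonneg (g t ω),
          mul_pos hη0 hη0, sq_nonneg (η * ‖g t ω‖ - B)]
      nlinarith [hdes, hi1, hi2, hnsq, hL.le, mul_le_mul_of_nonneg_left hnsq (by positivity : (0:ℝ) ≤ L / 2)]
    -- integrate the pointwise inequality
    have hr1 : Integrable (fun ω => η * ⟪F' (w t ω), g t ω⟫) P := hinner.const_mul η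
    have hr2 : Integrable (fun ω => F (w t ω) - η * ⟪F' (w t ω), g t ω⟫) P :=
      (hFint t ht.le).sub hr1
    have hr3 : Integrable (fun ω => L * η ^ 2 * ‖g t ω‖ ^ 2) P := hgsq.const_mul _
    have hr4 : Integrable (fun ω => F (w t ω) - η * ⟪F' (w t ω), g t ω⟫
        + L * η ^ 2 * ‖g t ω‖ ^ 2) P := hr2.add hr3
    have hRHSint : Integrable (fun ω => F (w t ω) - η * ⟪F' (w t ω), g t ω⟫
        + L * η ^ 2 * ‖g t ω‖ ^ 2 + (ρ * B + L * B ^ 2)) P := hr4.add (integrable_const _)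
    have hI := integral_mono_ae (hint t ht) hRHSint hptw
    rw [integral_add hr4 (integrable_const _), integral_add hr2 hr3,
      integral_sub (hFint t ht.le) hr1,
      integral_const_mul, integral_const_mul, integral_const, probReal_univ] at hI
    simp only [ENNReal.toReal_one, one_smul] at hI
    rw [hcross] at hI
    have ha_nn : 0 ≤ ∫ ω, ‖F' (w t ω)‖ ^ 2 ∂P := integral_nonneg fun ω => sq_nonneg _
    nlinarith [hI, hsecond, ha_nn, hBpos.le, hLB,
      mul_le_mul_of_nonneg_left hsecond (by positivity : (0:ℝ) ≤ L * η ^ 2),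
      mul_nonneg (mul_nonneg hη0.le (by linarith : (0:ℝ) ≤ 1 / 2 - L * η)) ha_nn,
      mul_nonneg hBpos.le (by linarith : (0:ℝ) ≤ ρ - L * B)]
  -- sum over rounds
  set C : ℝ := L * η ^ 2 * δ ^ 2 + 2 * (ρ * B) with hCdef
  set a : ℕ → ℝ := fun t => ∫ ω, ‖F' (w t ω)‖ ^ 2 ∂P with hadef
  set φ : ℕ → ℝ := fun t => ∫ ω, F (w t ω) ∂P with hφdef
  have hsum : ∑ t ∈ Finset.range T, (η / 2 * a t) ≤
      ∑ t ∈ Finset.range T, ((φ t - φ (t + 1)) + C) :=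
    Finset.sum_le_sum fun t ht => key t (Finset.mem_range.mp ht)
  rw [← Finset.mul_sum, Finset.sum_add_distrib, Finset.sum_range_sub' φ,
    Finset.sum_const, Finset.card_range, nsmul_eq_mul] at hsum
  have hφ0 : φ 0 = F w0 := by
    rw [hφdef]
    simp only [hw0]
    simp
  have hφT : F wstar ≤ φ T := by
    rw [hφdef]
    calc F wstar = ∫ _ω, F wstar ∂P := by simp
      _ ≤ ∫ ω, F (w T ω) ∂P :=
        integral_mono_ae (integrable_const _) (hFint T le_rfl)
          (Filter.Eventually.of_forall fun ω => hmin _)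
  have hSa_nn : 0 ≤ ∑ t ∈ Finset.range T, a t :=
    Finset.sum_nonneg fun t _ => integral_nonneg fun ω => sq_nonneg _
  have hTpos' : (0:ℝ) < T := by exact_mod_cast hTpos
  set Sa : ℝ := ∑ t ∈ Finset.range T, a t with hSadef
  set D : ℝ := F w0 - F wstar with hDdef
  have hkey2 : η / 2 * Sa ≤ D + T * C := by
    rw [hφ0] at hsum
    have : φ 0 - φ T ≤ D := by rw [hφ0, hDdef]; linarith [hφT]
    linarith [hsum, hφT]
  have hSa_le : Sa ≤ 2 / η * (D + (T : ℝ) * C) := by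
    rw [div_mul_eq_mul_div, le_div_iff₀ hη0]
    nlinarith [hkey2]
  have hfin : 1 / (T : ℝ) * Sa ≤ 1 / (T : ℝ) * (2 / η * (D + (T : ℝ) * C)) :=
    mul_le_mul_of_nonneg_left hSa_le (by positivity)
  have heq : 1 / (T : ℝ) * (2 / η * (D + (T : ℝ) * C)) =
      2 * D / (η * T) + 2 * (L * η ^ 2 * δ ^ 2) / η + 2 * (2 * (ρ * B)) / η := by
    rw [hCdef]
    field_simp
    ring
  rw [heq] at hfin
  have h1 : 2 * (L * η ^ 2 * δ ^ 2) / η = 2 * L * η * δ ^ 2 := by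
    field_simp
  have h2 : 2 * (2 * (ρ * B)) / η = 4 * γ * ρ * ψ * (1 - α) / η := by
    rw [hBdef]
    ring_nf
  rw [h1, h2] at hfin
  have h3 : (0:ℝ) ≤ 2 * L * η * δ ^ 2 := by positivity
  calc 1 / (T : ℝ) * ∑ t ∈ Finset.range T, ∫ ω, ‖F' (w t ω)‖ ^ 2 ∂P
      = 1 / (T : ℝ) * Sa := rfl
    _ ≤ 2 * D / (η * T) + 2 * L * η * δ ^ 2 + 4 * γ * ρ * ψ * (1 - α) / η := hfin
    _ ≤ 2 * (F w0 - F wstar) / (η * T) + 4 * L * η * δ ^ 2 + 4 * γ * ρ * ψ * (1 - α) / η := by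
        rw [hDdef]
        nlinarith [h3, mul_pos hL hη0, sq_nonneg δ]
end

section
/- Let E be a real inner product space and let F : E → ℝ be differentiable, μ-strongly convex and L-smooth, with global minimizer w* ∈ E. Fix real parameters with 0 < μ, 0 < L, 0 ≤ α < 1, ψ > 0, ρ > 0, γ > 0, 0 < η ≤ min{1/(4L), 1/μ}, and γ ≤ ρ/(L·ψ·(1−α)). Let w⁰ ∈ E and for each t = 0, 1, …, T−1 define w^{t+½} = wᵗ − η∇F(wᵗ) and w^{t+1} = w^{t+½} + (1−α)·uᵗ, where uᵗ ∈ E satisfies ‖uᵗ‖ ≤ γψ, and assume ‖w^{t+½}‖ ≤ ψ and ‖∇F(wᵗ)‖ ≤ ρ for all t. Then F(w^T) − F(w*) ≤ (1−μη)^T · (F(w⁰) − F(w*)) + 2γρψ(1−α)/(μη). -/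
open RealInnerProductSpace

lemma descent_lemma_aux
    {E : Type*} [NormedAddCommGroup E] [InnerProductSpace ℝ E]
    {F : E → ℝ} {F' : E → E}
    (hdiff : ∀ x, HasFDerivAt F (InnerProductSpace.toDualMap ℝ E (F' x) : E →L[ℝ] ℝ) x)
    {L : ℝ}
    (hsmooth : ∀ x y, ‖F' x - F' y‖ ≤ L * ‖x - y‖) (x y : E) :
    F y ≤ F x + ⟪F' x, y - x⟫ + L / 2 * ‖y - x‖ ^ 2 := by
  set v := y - x with hv
  set g : ℝ → ℝ := fun s => F (x + s • v) - s * ⟪F' x, v⟫ - L * s ^ 2 / 2 * ‖v‖ ^ 2 with hg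
  have hcurve : ∀ s : ℝ, HasDerivAt (fun s : ℝ => x + s • v) v s := by
    intro s
    simpa using ((hasDerivAt_id s).smul_const v).const_add x
  have hgd : ∀ s : ℝ, HasDerivAt g
      (⟪F' (x + s • v), v⟫ - ⟪F' x, v⟫ - L * s * ‖v‖ ^ 2) s := by
    intro s
    have h1 : HasDerivAt (fun s : ℝ => F (x + s • v)) ⟪F' (x + s • v), v⟫ s := by
      have h := ((hdiff (x + s • v)).comp_hasDerivAt s (hcurve s))
      simp at h
      exact h
    have h2 : HasDerivAt (fun s : ℝ => s * ⟪F' x, v⟫) ⟪F' x, v⟫ s := by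
      simpa using (hasDerivAt_id s).mul_const ⟪F' x, v⟫
    have h3 : HasDerivAt (fun s : ℝ => L * s ^ 2 / 2 * ‖v‖ ^ 2) (L * s * ‖v‖ ^ 2) s := by
      have := ((hasDerivAt_pow 2 s).const_mul L).div_const 2 |>.mul_const (‖v‖ ^ 2)
      exact this.congr_deriv (by rw [show (2:ℕ) - 1 = 1 from rfl, pow_one]; push_cast; ring)
    exact (h1.sub h2).sub h3
  have hanti : AntitoneOn g (Set.Icc 0 1) := by
    apply antitoneOn_of_deriv_nonpos (convex_Icc 0 1)
    · exact (Differentiable.continuous (fun s => (hgd s).differentiableAt)).continuousOn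
    · intro s hs
      exact (hgd s).differentiableAt.differentiableWithinAt
    · intro s hs
      rw [interior_Icc] at hs
      rw [(hgd s).deriv]
      have hcs : ⟪F' (x + s • v) - F' x, v⟫ ≤ ‖F' (x + s • v) - F' x‖ * ‖v‖ :=
        real_inner_le_norm _ _
      have hlip : ‖F' (x + s • v) - F' x‖ ≤ L * (s * ‖v‖) := by
        have := hsmooth (x + s • v) x
        simpa [norm_smul, abs_of_pos hs.1, mul_assoc] using this
      have : ⟪F' (x + s • v), v⟫ - ⟪F' x, v⟫ ≤ L * s * ‖v‖ ^ 2 := by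
        rw [← inner_sub_left]
        calc ⟪F' (x + s • v) - F' x, v⟫ ≤ ‖F' (x + s • v) - F' x‖ * ‖v‖ := hcs
        _ ≤ L * (s * ‖v‖) * ‖v‖ := by
            apply mul_le_mul_of_nonneg_right hlip (norm_nonneg _)
        _ = L * s * ‖v‖ ^ 2 := by ring
      linarith
  have := hanti (Set.left_mem_Icc.mpr zero_le_one) (Set.right_mem_Icc.mpr zero_le_one) zero_le_one
  simp only [hg] at this
  simp only [zero_smul, one_smul, add_zero] at this
  have hxy : x + v = y := by rw [hv]; abel
  rw [hxy] at this
  nlinarith [this]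

/-- Deterministic (exact-gradient) core of Theorem 1: BALANCE with strongly convex
objective converges linearly to a neighborhood of the global minimum. -/
theorem balance_strongly_convex_deterministic
    {E : Type*} [NormedAddCommGroup E] [InnerProductSpace ℝ E]
    {F : E → ℝ} {F' : E → E}
    (hdiff : ∀ x, HasFDerivAt F (InnerProductSpace.toDualMap ℝ E (F' x) : E →L[ℝ] ℝ) x)
    {μ L α ψ ρ γ η : ℝ}
    (hstrongconvex : ∀ x y, F x + ⟪F' x, y - x⟫ + μ / 2 * ‖y - x‖ ^ 2 ≤ F y)
    (hsmooth : ∀ x y, ‖F' x - F' y‖ ≤ L * ‖x - y‖)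
    {wstar : E} (hmin : ∀ x, F wstar ≤ F x)
    (hμ : 0 < μ) (hL : 0 < L) (hα0 : 0 ≤ α) (hα1 : α < 1)
    (hψ : 0 < ψ) (hρ : 0 < ρ) (hγ : 0 < γ)
    (hη0 : 0 < η) (hη : η ≤ min (1 / (4 * L)) (1 / μ))
    (hγle : γ ≤ ρ / (L * ψ * (1 - α)))
    {T : ℕ} (w : ℕ → E) (u : ℕ → E)
    (hupdate : ∀ t < T, w (t + 1) = (w t - η • F' (w t)) + (1 - α) • u t)
    (hu : ∀ t < T, ‖u t‖ ≤ γ * ψ)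
    (hψbd : ∀ t < T, ‖w t - η • F' (w t)‖ ≤ ψ)
    (hρbd : ∀ t < T, ‖F' (w t)‖ ≤ ρ) :
    F (w T) - F wstar ≤
      (1 - μ * η) ^ T * (F (w 0) - F wstar) + 2 * γ * ρ * ψ * (1 - α) / (μ * η) := by
  have h1α : (0:ℝ) < 1 - α := by linarith
  have hLη : L * η ≤ 1 / 4 := by
    have h1 := le_trans hη (min_le_left _ _)
    rw [le_div_iff₀ (by positivity)] at h1
    linarith
  have hμη : μ * η ≤ 1 := by
    have h1 := le_trans hη (min_le_right _ _)
    rw [le_div_iff₀ hμ] at h1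
    linarith
  have hr0 : 0 ≤ 1 - μ * η := by linarith
  have hb0 : 0 ≤ (1 - α) * (γ * ψ) := mul_nonneg h1α.le (by positivity)
  have hLγψ : L * ((1 - α) * (γ * ψ)) ≤ ρ := by
    rw [le_div_iff₀ (mul_pos (mul_pos hL hψ) h1α)] at hγle
    linarith
  set C : ℝ := 2 * γ * ρ * ψ * (1 - α) with hC
  have hC0 : 0 ≤ C := by rw [hC]; positivity
  -- per-step inequality
  have hstep : ∀ t, t < T →
      F (w (t + 1)) - F wstar ≤ (1 - μ * η) * (F (w t) - F wstar) + C := by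
    intro t ht
    set g := F' (w t) with hgdef
    have hdval : w (t + 1) - w t = -(η • g) + (1 - α) • u t := by
      rw [hupdate t ht]; abel
    have hdesc := descent_lemma_aux hdiff hsmooth (w t) (w (t + 1))
    rw [hdval] at hdesc
    have hinner : ⟪g, -(η • g) + (1 - α) • u t⟫ = -(η * ‖g‖ ^ 2) + (1 - α) * ⟪g, u t⟫ := by
      rw [inner_add_right, inner_neg_right, real_inner_smul_right, real_inner_smul_right,
        real_inner_self_eq_norm_sq]
    rw [hinner] at hdesc
    have hgu : ⟪g, u t⟫ ≤ ρ * (γ * ψ) := by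
      calc ⟪g, u t⟫ ≤ ‖g‖ * ‖u t‖ := real_inner_le_norm _ _
      _ ≤ ρ * (γ * ψ) :=
        mul_le_mul (hρbd t ht) (hu t ht) (norm_nonneg _) hρ.le
    set b : ℝ := (1 - α) * (γ * ψ) with hbdef
    set a : ℝ := η * ‖g‖ with hadef
    have hnormd : ‖-(η • g) + (1 - α) • u t‖ ≤ a + b := by
      calc ‖-(η • g) + (1 - α) • u t‖ ≤ ‖-(η • g)‖ + ‖(1 - α) • u t‖ := norm_add_le _ _
      _ = η * ‖g‖ + (1 - α) * ‖u t‖ := by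
          rw [norm_neg, norm_smul, norm_smul, Real.norm_eq_abs, Real.norm_eq_abs,
            abs_of_pos hη0, abs_of_pos h1α]
      _ ≤ a + b := by
          have h := mul_le_mul_of_nonneg_left (hu t ht) h1α.le
          rw [hadef, hbdef]
          linarith
    have hnormd2 : ‖-(η • g) + (1 - α) • u t‖ ^ 2 ≤ (a + b) ^ 2 :=
      pow_le_pow_left₀ (norm_nonneg _) hnormd 2
    have hstep1 : L / 2 * ‖-(η • g) + (1 - α) • u t‖ ^ 2 ≤ L / 2 * (a + b) ^ 2 :=
      mul_le_mul_of_nonneg_left hnormd2 (by positivity)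
    have hgρ : ‖g‖ ≤ ρ := hρbd t ht
    have hg0 : (0:ℝ) ≤ ‖g‖ := norm_nonneg _
    have hexp : L / 2 * (a + b) ^ 2 = L / 2 * a ^ 2 + L * a * b + L / 2 * b ^ 2 := by ring
    have e1 : L / 2 * a ^ 2 ≤ η * ‖g‖ ^ 2 / 8 := by
      have h := mul_le_mul_of_nonneg_right hLη
        (mul_nonneg hη0.le (sq_nonneg ‖g‖))
      rw [hadef]
      linarith [h]
    have e2 : L * a * b ≤ ρ * b / 4 := by
      have h1 : L * η * ‖g‖ ≤ 1 / 4 * ρ :=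
        mul_le_mul hLη hgρ hg0 (by norm_num)
      have h2 := mul_le_mul_of_nonneg_right h1 hb0
      rw [hadef]
      linarith [h2]
    have e3 : L / 2 * b ^ 2 ≤ ρ * b / 2 := by
      have h := mul_le_mul_of_nonneg_right hLγψ hb0
      linarith [h]
    have e4 : (1 - α) * ⟪g, u t⟫ ≤ ρ * b := by
      have h := mul_le_mul_of_nonneg_left hgu h1α.le
      rw [hbdef]
      linarith [h]
    have hCb : C = 2 * (ρ * b) := by rw [hC, hbdef]; ring
    have hkey : F (w (t + 1)) ≤ F (w t) - η / 2 * ‖g‖ ^ 2 + C := by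
      have hρb : 0 ≤ ρ * b := mul_nonneg hρ.le hb0
      have hηg2 : 0 ≤ η * ‖g‖ ^ 2 := mul_nonneg hη0.le (sq_nonneg _)
      rw [hCb]
      linarith [hdesc, hstep1, hexp, e1, e2, e3, e4]
    -- PL inequality
    have hPL : 2 * μ * (F (w t) - F wstar) ≤ ‖g‖ ^ 2 := by
      have h1 := hstrongconvex (w t) wstar
      have h2 : -(‖g‖ * ‖wstar - w t‖) ≤ ⟪g, wstar - w t⟫ := by
        have := abs_real_inner_le_norm g (wstar - w t)
        cases abs_le.mp this with
        | intro hl hr => linarith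
      have h6 : F (w t) - F wstar ≤
          ‖g‖ * ‖wstar - w t‖ - μ / 2 * ‖wstar - w t‖ ^ 2 := by linarith
      have h7 := mul_le_mul_of_nonneg_left h6 (by positivity : (0:ℝ) ≤ 2 * μ)
      linarith [h7, sq_nonneg (μ * ‖wstar - w t‖ - ‖g‖)]
    have h5 := mul_le_mul_of_nonneg_left hPL (by positivity : (0:ℝ) ≤ η / 2)
    linarith [hkey, h5]
  -- induction
  have hμη0 : (0:ℝ) < μ * η := by positivity
  have key : ∀ n, n ≤ T →
      F (w n) - F wstar ≤ (1 - μ * η) ^ n * (F (w 0) - F wstar) + C / (μ * η) := by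
    intro n
    induction n with
    | zero =>
      intro _
      simp only [pow_zero, one_mul]
      have : 0 ≤ C / (μ * η) := div_nonneg hC0 hμη0.le
      linarith
    | succ n ih =>
      intro hn
      have hnT : n < T := Nat.lt_of_lt_of_le (Nat.lt_succ_self n) hn
      have h1 := hstep n hnT
      have h2 := ih (Nat.le_of_lt hnT)
      have h3 := mul_le_mul_of_nonneg_left h2 hr0
      have h4 : (1 - μ * η) * (C / (μ * η)) + C = C / (μ * η) := by
        field_simp
        ring
      calc F (w (n + 1)) - F wstar ≤ (1 - μ * η) * (F (w n) - F wstar) + C := h1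
      _ ≤ (1 - μ * η) * ((1 - μ * η) ^ n * (F (w 0) - F wstar) + C / (μ * η)) + C := by
          linarith
      _ = (1 - μ * η) ^ (n + 1) * (F (w 0) - F wstar) +
          ((1 - μ * η) * (C / (μ * η)) + C) := by ring
      _ = (1 - μ * η) ^ (n + 1) * (F (w 0) - F wstar) + C / (μ * η) := by rw [h4]
  exact key T le_rfl
end

section
/- Let E be a finite-dimensional real inner product space and let F : E → ℝ be differentiable and L-smooth with L > 0. Fix w ∈ E with ‖∇F(w)‖ ≤ ρ, real parameters 0 ≤ α ≤ 1, ψ > 0, ρ > 0, δ ≥ 0, γ > 0 with L·γ²·ψ²·(1−α)² ≤ γ·ρ·ψ·(1−α), and 0 < η ≤ 1/(4L). Let (Ω, 𝓕, P) be a probability space, let g : Ω → E be square-integrable with ∫ g dP = ∇F(w) and ∫ ‖g − ∇F(w)‖² dP ≤ δ², and let u : Ω → E be measurable with ‖u(ω)‖ ≤ γψ for almost every ω. Define the random point w⁺ = w − η·g + (1−α)·u and assume F(w⁺) is integrable. Then E[F(w⁺)] ≤ F(w) − (η/2)·‖∇F(w)‖² + 2Lη²δ² + 2γρψ(1−α).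 -/
open MeasureTheory RealInnerProductSpace

lemma descent_aux {E : Type*} [NormedAddCommGroup E] [InnerProductSpace ℝ E] [CompleteSpace E]
    {F : E → ℝ} {F' : E → E} {L : ℝ} (hL : 0 < L)
    (hdiff : ∀ x, HasGradientAt F (F' x) x)
    (hsmooth : ∀ x y, ‖F' x - F' y‖ ≤ L * ‖x - y‖)
    (x d : E) : F (x + d) ≤ F x + ⟪F' x, d⟫ + L / 2 * ‖d‖ ^ 2 := by
  have hcont : Continuous F' := by
    have : LipschitzWith (Real.toNNReal L) F' := by
      refine LipschitzWith.of_dist_le_mul fun a b => ?_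
      rw [dist_eq_norm, dist_eq_norm, Real.coe_toNNReal _ hL.le]
      exact hsmooth a b
    exact this.continuous
  have hderiv : ∀ t : ℝ, HasDerivAt (fun t : ℝ => F (x + t • d)) ⟪F' (x + t • d), d⟫ t := by
    intro t
    have h1 : HasDerivAt (fun t : ℝ => x + t • d) d t := by
      simpa using ((hasDerivAt_id t).smul_const d).const_add x
    have := ((hdiff (x + t • d)).hasFDerivAt.comp_hasDerivAt t h1)
    exact this
  have hcont2 : Continuous fun t : ℝ => ⟪F' (x + t • d), d⟫ := by
    exact (hcont.comp (by continuity)).inner continuous_const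
  have hint : IntervalIntegrable (fun t : ℝ => ⟪F' (x + t • d), d⟫) MeasureTheory.volume 0 1 :=
    hcont2.intervalIntegrable 0 1
  have key : F (x + d) - F x = ∫ t in (0:ℝ)..1, ⟪F' (x + t • d), d⟫ := by
    have := intervalIntegral.integral_eq_sub_of_hasDerivAt (f := fun t : ℝ => F (x + t • d))
      (fun t _ => hderiv t) hint
    simp only [one_smul, zero_smul, add_zero] at this
    linarith [this]
  have hint2 : IntervalIntegrable (fun t : ℝ => ⟪F' x, d⟫ + L * t * ‖d‖ ^ 2)
      MeasureTheory.volume 0 1 := by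
    apply Continuous.intervalIntegrable; continuity
  have hb : (∫ t in (0:ℝ)..1, ⟪F' (x + t • d), d⟫) ≤
      ∫ t in (0:ℝ)..1, (⟪F' x, d⟫ + L * t * ‖d‖ ^ 2) := by
    refine intervalIntegral.integral_mono_on zero_le_one hint hint2 fun t ht => ?_
    have h1 : ⟪F' (x + t • d), d⟫ - ⟪F' x, d⟫ = ⟪F' (x + t • d) - F' x, d⟫ := by
      rw [inner_sub_left]
    have h2 : ⟪F' (x + t • d) - F' x, d⟫ ≤ ‖F' (x + t • d) - F' x‖ * ‖d‖ :=
      real_inner_le_norm _ _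
    have h3 : ‖F' (x + t • d) - F' x‖ ≤ L * (t * ‖d‖) := by
      have := hsmooth (x + t • d) x
      simpa [norm_smul, abs_of_nonneg ht.1] using this
    have h4 : ‖F' (x + t • d) - F' x‖ * ‖d‖ ≤ L * (t * ‖d‖) * ‖d‖ :=
      mul_le_mul_of_nonneg_right h3 (norm_nonneg d)
    nlinarith [norm_nonneg d]
  have hval : (∫ t in (0:ℝ)..1, (⟪F' x, d⟫ + L * t * ‖d‖ ^ 2)) =
      ⟪F' x, d⟫ + L / 2 * ‖d‖ ^ 2 := by
    rw [intervalIntegral.integral_add (intervalIntegrable_const)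
      (by apply Continuous.intervalIntegrable; continuity)]
    have h5 : (∫ t in (0:ℝ)..1, L * t * ‖d‖ ^ 2) = L / 2 * ‖d‖ ^ 2 := by
      have : (fun t : ℝ => L * t * ‖d‖ ^ 2) = fun t : ℝ => (L * ‖d‖ ^ 2) * t := by
        funext t; ring
      rw [this, intervalIntegral.integral_const_mul, integral_id]
      ring
    rw [h5]; simp
  rw [hval] at hb
  linarith [key, hb]

set_option maxHeartbeats 1000000 in
/-- Single-round expected descent inequality (Eq. (15) in the proof of Theorem 1). -/
theorem balance_single_round_descent
    {E : Type*} [NormedAddCommGroup E] [InnerProductSpace ℝ E]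
    [FiniteDimensional ℝ E] [MeasurableSpace E] [BorelSpace E]
    {F : E → ℝ} {F' : E → E}
    (hdiff : ∀ x, HasGradientAt F (F' x) x)
    {L α ψ ρ δ γ η : ℝ} (hL : 0 < L)
    (hsmooth : ∀ x y, ‖F' x - F' y‖ ≤ L * ‖x - y‖)
    {w : E} (hρbd : ‖F' w‖ ≤ ρ)
    (hα0 : 0 ≤ α) (hα1 : α ≤ 1) (hψ : 0 < ψ) (hρ : 0 < ρ) (hδ : 0 ≤ δ) (hγ : 0 < γ)
    (hγle : L * γ ^ 2 * ψ ^ 2 * (1 - α) ^ 2 ≤ γ * ρ * ψ * (1 - α))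
    (hη0 : 0 < η) (hη : η ≤ 1 / (4 * L))
    {Ω : Type*} [MeasurableSpace Ω] {P : Measure Ω} [IsProbabilityMeasure P]
    (g u : Ω → E)
    (hgL2 : MemLp g 2 P)
    (hgmean : (∫ ω, g ω ∂P) = F' w)
    (hgvar : (∫ ω, ‖g ω - F' w‖ ^ 2 ∂P) ≤ δ ^ 2)
    (humeas : Measurable u)
    (hubd : ∀ᵐ ω ∂P, ‖u ω‖ ≤ γ * ψ)
    (hFint : Integrable (fun ω => F (w - η • g ω + (1 - α) • u ω)) P) :
    (∫ ω, F (w - η • g ω + (1 - α) • u ω) ∂P) ≤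
      F w - η / 2 * ‖F' w‖ ^ 2 + 2 * L * η ^ 2 * δ ^ 2 + 2 * γ * ρ * ψ * (1 - α) := by
  set μ := F' w with hμ
  have hα : 0 ≤ 1 - α := by linarith
  have hg1 : Integrable g P := hgL2.integrable one_le_two
  have hgsq : Integrable (fun ω => ‖g ω‖ ^ 2) P := hgL2.norm.integrable_sq
  have hu1 : Integrable u P :=
    Integrable.mono' (integrable_const (γ * ψ)) humeas.aestronglyMeasurable hubd
  set d : Ω → E := fun ω => -(η • g ω) + (1 - α) • u ω with hd_def
  have hng : Integrable (fun ω => -(η • g ω)) P := (hg1.smul η).neg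
  have hau : Integrable (fun ω => (1 - α) • u ω) P := hu1.smul (1 - α)
  have hd : Integrable d P := hng.add hau
  have hrw : (fun ω => F (w - η • g ω + (1 - α) • u ω)) = fun ω => F (w + d ω) := by
    funext ω
    congr 1
    simp only [hd_def]
    module
  rw [hrw] at hFint ⊢
  -- pointwise a.e. bound
  have hpt : ∀ᵐ ω ∂P, F (w + d ω) ≤
      F w + ⟪μ, d ω⟫ + L / 2 * (2 * η ^ 2 * ‖g ω‖ ^ 2 + 2 * (1 - α) ^ 2 * (γ * ψ) ^ 2) := by
    filter_upwards [hubd] with ω hω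
    refine (descent_aux hL hdiff hsmooth w (d ω)).trans ?_
    have hnd : ‖d ω‖ ≤ η * ‖g ω‖ + (1 - α) * (γ * ψ) := by
      calc ‖d ω‖ ≤ ‖-(η • g ω)‖ + ‖(1 - α) • u ω‖ := norm_add_le _ _
        _ = |η| * ‖g ω‖ + |1 - α| * ‖u ω‖ := by
            rw [norm_neg, norm_smul, norm_smul, Real.norm_eq_abs, Real.norm_eq_abs]
        _ ≤ η * ‖g ω‖ + (1 - α) * (γ * ψ) := by
            rw [abs_of_nonneg hη0.le, abs_of_nonneg hα]
            have := mul_le_mul_of_nonneg_left hω hα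
            linarith
    have h0 : ‖d ω‖ ^ 2 ≤ (η * ‖g ω‖ + (1 - α) * (γ * ψ)) ^ 2 :=
      pow_le_pow_left₀ (norm_nonneg _) hnd 2
    have h1 : (η * ‖g ω‖ + (1 - α) * (γ * ψ)) ^ 2 ≤
        2 * η ^ 2 * ‖g ω‖ ^ 2 + 2 * (1 - α) ^ 2 * (γ * ψ) ^ 2 := by
      nlinarith [sq_nonneg (η * ‖g ω‖ - (1 - α) * (γ * ψ))]
    have h2 : L / 2 * ‖d ω‖ ^ 2 ≤
        L / 2 * (2 * η ^ 2 * ‖g ω‖ ^ 2 + 2 * (1 - α) ^ 2 * (γ * ψ) ^ 2) :=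
      mul_le_mul_of_nonneg_left (h0.trans h1) (by positivity)
    linarith
  have hquad : Integrable
      (fun ω => L / 2 * (2 * η ^ 2 * ‖g ω‖ ^ 2 + 2 * (1 - α) ^ 2 * (γ * ψ) ^ 2)) P := by
    have h1 : Integrable (fun ω => 2 * η ^ 2 * ‖g ω‖ ^ 2) P := hgsq.const_mul _
    have h2 : Integrable
        (fun ω => 2 * η ^ 2 * ‖g ω‖ ^ 2 + 2 * (1 - α) ^ 2 * (γ * ψ) ^ 2) P :=
      h1.add (integrable_const _)
    exact h2.const_mul _
  have hinner : Integrable (fun ω => ⟪μ, d ω⟫) P := hd.const_inner μ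
  have hFwinner : Integrable (fun ω => F w + ⟪μ, d ω⟫) P := (integrable_const (F w)).add hinner
  have hRHSint : Integrable (fun ω => F w + ⟪μ, d ω⟫ +
      L / 2 * (2 * η ^ 2 * ‖g ω‖ ^ 2 + 2 * (1 - α) ^ 2 * (γ * ψ) ^ 2)) P :=
    hFwinner.add hquad
  have hmono := integral_mono_ae hFint hRHSint hpt
  refine hmono.trans ?_
  -- compute the RHS integral
  have hIdint : (∫ ω, d ω ∂P) = -(η • μ) + (1 - α) • (∫ ω, u ω ∂P) := by
    rw [show (∫ ω, d ω ∂P) = ∫ ω, (-(η • g ω) + (1 - α) • u ω) ∂P from rfl,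
      integral_add hng hau, integral_neg, integral_smul, integral_smul, hgmean]
  have hIinner : (∫ ω, ⟪μ, d ω⟫ ∂P) = ⟪μ, ∫ ω, d ω ∂P⟫ := integral_inner hd μ
  have hsplit : (∫ ω, (F w + ⟪μ, d ω⟫ +
      L / 2 * (2 * η ^ 2 * ‖g ω‖ ^ 2 + 2 * (1 - α) ^ 2 * (γ * ψ) ^ 2)) ∂P) =
      F w + ⟪μ, ∫ ω, d ω ∂P⟫ +
      L / 2 * (2 * η ^ 2 * (∫ ω, ‖g ω‖ ^ 2 ∂P) + 2 * (1 - α) ^ 2 * (γ * ψ) ^ 2) := by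
    rw [integral_add hFwinner hquad, integral_add (integrable_const (F w)) hinner,
      integral_const, integral_const_mul,
      integral_add (hgsq.const_mul (2 * η ^ 2)) (integrable_const _), integral_const_mul,
      integral_const, hIinner]
    simp [measure_univ]
  rw [hsplit, hIdint]
  -- bound ‖∫ u‖
  have hubar : ‖∫ ω, u ω ∂P‖ ≤ γ * ψ := by
    refine (norm_integral_le_integral_norm u).trans ?_
    have h := integral_mono_ae hu1.norm (integrable_const (γ * ψ)) hubd
    simpa [measure_univ] using h
  -- bound second moment
  have hsecond : (∫ ω, ‖g ω‖ ^ 2 ∂P) ≤ ‖μ‖ ^ 2 + δ ^ 2 := by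
    have hexp : ∀ ω, ‖g ω‖ ^ 2 = ‖g ω - μ‖ ^ 2 + 2 * ⟪μ, g ω - μ⟫ + ‖μ‖ ^ 2 := by
      intro ω
      have h := norm_add_sq_real (g ω - μ) μ
      rw [sub_add_cancel] at h
      have hc := real_inner_comm (g ω - μ) μ
      linarith
    have hvar_int : Integrable (fun ω => ‖g ω - μ‖ ^ 2) P :=
      ((hgL2.sub (memLp_const μ)).norm).integrable_sq
    have hsubint : Integrable (fun ω => g ω - μ) P := hg1.sub (integrable_const μ)
    have hcross : Integrable (fun ω => ⟪μ, g ω - μ⟫) P := hsubint.const_inner μ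
    have hcross2 : Integrable (fun ω => 2 * ⟪μ, g ω - μ⟫) P := hcross.const_mul 2
    have hIcross : (∫ ω, ⟪μ, g ω - μ⟫ ∂P) = 0 := by
      rw [integral_inner hsubint μ, integral_sub hg1 (integrable_const μ), hgmean,
        integral_const]
      simp [measure_univ]
    have hkey : (∫ ω, ‖g ω‖ ^ 2 ∂P) =
        (∫ ω, ‖g ω - μ‖ ^ 2 ∂P) + 2 * (∫ ω, ⟪μ, g ω - μ⟫ ∂P) + ‖μ‖ ^ 2 := by
      simp_rw [hexp]
      have hsum : Integrable (fun ω => ‖g ω - μ‖ ^ 2 + 2 * ⟪μ, g ω - μ⟫) P :=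
        hvar_int.add hcross2
      rw [integral_add hsum (integrable_const _),
        integral_add hvar_int hcross2, integral_const_mul, integral_const]
      simp [measure_univ]
    rw [hkey, hIcross]
    linarith [hgvar]
  -- final arithmetic
  have hIp : ⟪μ, -(η • μ) + (1 - α) • (∫ ω, u ω ∂P)⟫ =
      -(η * ‖μ‖ ^ 2) + (1 - α) * ⟪μ, ∫ ω, u ω ∂P⟫ := by
    rw [inner_add_right, inner_neg_right, real_inner_smul_right, real_inner_smul_right,
      real_inner_self_eq_norm_sq]
  rw [hIp]
  have hX : ⟪μ, ∫ ω, u ω ∂P⟫ ≤ ρ * (γ * ψ) := by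
    refine (real_inner_le_norm _ _).trans ?_
    exact mul_le_mul hρbd hubar (norm_nonneg _) hρ.le
  have hLη : L * η ≤ 1 / 4 := by
    have h4 : (0:ℝ) < 4 * L := by positivity
    calc L * η ≤ L * (1 / (4 * L)) := mul_le_mul_of_nonneg_left hη hL.le
      _ = 1 / 4 := by field_simp
  have a1 := mul_le_mul_of_nonneg_left hX hα
  have a2 := mul_le_mul_of_nonneg_left hsecond (by positivity : (0:ℝ) ≤ L * η ^ 2)
  have a3 := mul_le_mul_of_nonneg_right hLη (mul_nonneg hη0.le (sq_nonneg ‖μ‖))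
  have a4 : 0 ≤ L * η ^ 2 * δ ^ 2 := by positivity
  have a5 : 0 ≤ η * ‖μ‖ ^ 2 := by positivity
  nlinarith [hγle, a1, a2, a3, a4, a5]
end

section
/- Let E be a finite-dimensional real inner product space and let F : E → ℝ be differentiable, μ-strongly convex (μ > 0) and L-smooth (L > 0), with global minimizer w* ∈ E. Fix w ∈ E with ‖∇F(w)‖ ≤ ρ, real parameters 0 ≤ α ≤ 1, ψ > 0, ρ > 0, δ ≥ 0, γ > 0 with L·γ²·ψ²·(1−α)² ≤ γ·ρ·ψ·(1−α), and 0 < η ≤ 1/(4L). Let (Ω, 𝓕, P) be a probability space, let g : Ω → E be square-integrable with ∫ g dP = ∇F(w) and ∫ ‖g − ∇F(w)‖² dP ≤ δ², and let u : Ω → E be measurable with ‖u(ω)‖ ≤ γψ almost everywhere. Define w⁺ = w − η·g + (1−α)·u and assume F(w⁺) is integrable. Then E[F(w⁺)] − F(w*) ≤ (1 − μη)·(F(w) − F(w*)) + 2Lη²δ² + 2γρψ(1−α). -/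
open MeasureTheory RealInnerProductSpace

/-- Descent lemma for an `L`-smooth function. -/
theorem my_descent
    {E : Type*} [NormedAddCommGroup E] [InnerProductSpace ℝ E] [CompleteSpace E]
    {F : E → ℝ} {F' : E → E}
    (hdiff : ∀ x, HasGradientAt F (F' x) x)
    {L : ℝ}
    (hsmooth : ∀ x y, ‖F' x - F' y‖ ≤ L * ‖x - y‖)
    (x v : E) : F (x + v) ≤ F x + ⟪F' x, v⟫ + L / 2 * ‖v‖ ^ 2 := by
  set φ : ℝ → ℝ := fun t => F (x + t • v) - t * ⟪F' x, v⟫ - L / 2 * t ^ 2 * ‖v‖ ^ 2 with hφ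
  have hline : ∀ t : ℝ, HasDerivAt (fun t : ℝ => x + t • v) v t := by
    intro t
    simpa using ((hasDerivAt_id t).smul_const v).const_add x
  have hd : ∀ t : ℝ, HasDerivAt φ
      (⟪F' (x + t • v), v⟫ - ⟪F' x, v⟫ - L * t * ‖v‖ ^ 2) t := by
    intro t
    have h1 : HasDerivAt (fun t : ℝ => F (x + t • v)) ⟪F' (x + t • v), v⟫ t := by
      have := ((hdiff (x + t • v)).hasFDerivAt.comp_hasDerivAt t (hline t))
      simpa [InnerProductSpace.toDual_apply_apply, Function.comp_def] using this
    have h2 : HasDerivAt (fun t : ℝ => t * ⟪F' x, v⟫) ⟪F' x, v⟫ t := by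
      simpa using (hasDerivAt_id t).mul_const ⟪F' x, v⟫
    have h3 : HasDerivAt (fun t : ℝ => L / 2 * t ^ 2 * ‖v‖ ^ 2) (L * t * ‖v‖ ^ 2) t := by
      have : HasDerivAt (fun t : ℝ => t ^ 2) (2 * t) t := by
        simpa using hasDerivAt_pow 2 t
      have := ((this.const_mul (L / 2)).mul_const (‖v‖ ^ 2))
      convert this using 1
      exacts [rfl, rfl, by ring]
    exact (h1.sub h2).sub h3
  have hanti : AntitoneOn φ (Set.Icc (0:ℝ) 1) := by
    apply antitoneOn_of_deriv_nonpos (convex_Icc 0 1)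
    · exact fun t _ => ((hd t).differentiableAt.continuousAt).continuousWithinAt
    · exact fun t _ => (hd t).differentiableAt.differentiableWithinAt
    · intro t ht
      rw [interior_Icc] at ht
      rw [(hd t).deriv]
      have hinner : ⟪F' (x + t • v) - F' x, v⟫ ≤ ‖F' (x + t • v) - F' x‖ * ‖v‖ :=
        real_inner_le_norm _ _
      have hlip : ‖F' (x + t • v) - F' x‖ ≤ L * (t * ‖v‖) := by
        have := hsmooth (x + t • v) x
        simpa [norm_smul, abs_of_nonneg ht.1.le, mul_assoc] using this
      have hv : (0:ℝ) ≤ ‖v‖ := norm_nonneg v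
      have := hinner.trans (mul_le_mul_of_nonneg_right hlip hv)
      rw [inner_sub_left] at this
      nlinarith [this]
  have h01 := hanti (Set.left_mem_Icc.2 zero_le_one) (Set.right_mem_Icc.2 zero_le_one) zero_le_one
  simp only [hφ] at h01
  simp at h01
  linarith [h01]

/-- Per-round contraction inequality in the proof of Theorem 1 (descent + PL). -/
theorem balance_single_round_contraction
    {E : Type*} [NormedAddCommGroup E] [InnerProductSpace ℝ E]
    [FiniteDimensional ℝ E] [MeasurableSpace E] [BorelSpace E]
    {F : E → ℝ} {F' : E → E}
    (hdiff : ∀ x, HasGradientAt F (F' x) x)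
    {μ L α ψ ρ δ γ η : ℝ} (hμ : 0 < μ) (hL : 0 < L)
    (hstrongconvex : ∀ x y, F x + ⟪F' x, y - x⟫ + μ / 2 * ‖y - x‖ ^ 2 ≤ F y)
    (hsmooth : ∀ x y, ‖F' x - F' y‖ ≤ L * ‖x - y‖)
    {wstar : E} (hmin : ∀ x, F wstar ≤ F x)
    {w : E} (hρbd : ‖F' w‖ ≤ ρ)
    (hα0 : 0 ≤ α) (hα1 : α ≤ 1) (hψ : 0 < ψ) (hρ : 0 < ρ) (hδ : 0 ≤ δ) (hγ : 0 < γ)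
    (hγle : L * γ ^ 2 * ψ ^ 2 * (1 - α) ^ 2 ≤ γ * ρ * ψ * (1 - α))
    (hη0 : 0 < η) (hη : η ≤ 1 / (4 * L))
    {Ω : Type*} [MeasurableSpace Ω] {P : Measure Ω} [IsProbabilityMeasure P]
    (g u : Ω → E)
    (hgL2 : MemLp g 2 P)
    (hgmean : (∫ ω, g ω ∂P) = F' w)
    (hgvar : (∫ ω, ‖g ω - F' w‖ ^ 2 ∂P) ≤ δ ^ 2)
    (humeas : Measurable u)
    (hubd : ∀ᵐ ω ∂P, ‖u ω‖ ≤ γ * ψ)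
    (hFint : Integrable (fun ω => F (w - η • g ω + (1 - α) • u ω)) P) :
    (∫ ω, F (w - η • g ω + (1 - α) • u ω) ∂P) - F wstar ≤
      (1 - μ * η) * (F w - F wstar) + 2 * L * η ^ 2 * δ ^ 2
        + 2 * γ * ρ * ψ * (1 - α) := by
  set m := F' w with hm
  clear_value m
  -- integrability facts
  have hgInt : Integrable g P := hgL2.integrable one_le_two
  have huL2 : MemLp u 2 P := by
    have htop : MemLp u ⊤ P :=
      memLp_top_of_bound humeas.aestronglyMeasurable (γ * ψ) hubd
    exact htop.mono_exponent le_top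
  have huInt : Integrable u P := huL2.integrable one_le_two
  have hg2Int : Integrable (fun ω => ‖g ω‖ ^ 2) P := by
    have := hgL2.integrable_norm_rpow (by norm_num) (by norm_num)
    simpa [ENNReal.toReal_ofNat, Real.rpow_natCast] using this
  have hu2Int : Integrable (fun ω => ‖u ω‖ ^ 2) P := by
    have := huL2.integrable_norm_rpow (by norm_num) (by norm_num)
    simpa [ENNReal.toReal_ofNat, Real.rpow_natCast] using this
  have hgm2Int : Integrable (fun ω => ‖g ω - m‖ ^ 2) P := by
    have := (hgL2.sub (memLp_const m)).integrable_norm_rpow (by norm_num) (by norm_num)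
    simpa [ENNReal.toReal_ofNat, Real.rpow_natCast] using this
  have hI1 : Integrable (fun ω => ⟪m, g ω⟫) P := hgInt.const_inner m
  have hI2 : Integrable (fun ω => ⟪m, u ω⟫) P := huInt.const_inner m
  -- second moment of g
  have hEg2 : (∫ ω, ‖g ω‖ ^ 2 ∂P) ≤ δ ^ 2 + ‖m‖ ^ 2 := by
    have hptw : ∀ ω, ‖g ω‖ ^ 2 = ‖g ω - m‖ ^ 2 + 2 * ⟪m, g ω - m⟫ + ‖m‖ ^ 2 := by
      intro ω
      have h := norm_add_sq_real (g ω - m) m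
      rw [sub_add_cancel, real_inner_comm] at h
      linarith
    have hgmInt : Integrable (fun ω => g ω - m) P := hgInt.sub (integrable_const m)
    have hImean : (∫ ω, ⟪m, g ω - m⟫ ∂P) = 0 := by
      rw [integral_inner hgmInt m]
      rw [integral_sub hgInt (integrable_const m), hgmean, integral_const]
      simp
    have hIin : Integrable (fun ω => ⟪m, g ω - m⟫) P := hgmInt.const_inner m
    calc (∫ ω, ‖g ω‖ ^ 2 ∂P)
        = ∫ ω, (‖g ω - m‖ ^ 2 + 2 * ⟪m, g ω - m⟫ + ‖m‖ ^ 2) ∂P := by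
          exact integral_congr_ae (Filter.Eventually.of_forall hptw)
      _ = (∫ ω, ‖g ω - m‖ ^ 2 ∂P) + 2 * (∫ ω, ⟪m, g ω - m⟫ ∂P) + ‖m‖ ^ 2 := by
          have e1 : Integrable (fun ω => ‖g ω - m‖ ^ 2 + 2 * ⟪m, g ω - m⟫) P :=
            hgm2Int.add (hIin.const_mul 2)
          rw [integral_add e1 (integrable_const _),
            integral_add hgm2Int (hIin.const_mul 2), integral_const_mul, integral_const]
          simp
      _ ≤ δ ^ 2 + ‖m‖ ^ 2 := by rw [hImean]; simpa using hgvar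
  -- the dominating function
  set B : Ω → ℝ := fun ω =>
    F w - η * ⟪m, g ω⟫ + (1 - α) * ⟪m, u ω⟫
      + L * η ^ 2 * ‖g ω‖ ^ 2 + L * (1 - α) ^ 2 * ‖u ω‖ ^ 2 with hB
  have e1 : Integrable (fun ω => F w - η * ⟪m, g ω⟫) P :=
    (integrable_const (F w)).sub (hI1.const_mul η)
  have e2 : Integrable (fun ω => F w - η * ⟪m, g ω⟫ + (1 - α) * ⟪m, u ω⟫) P :=
    e1.add (hI2.const_mul (1 - α))
  have e3 : Integrable (fun ω => F w - η * ⟪m, g ω⟫ + (1 - α) * ⟪m, u ω⟫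
      + L * η ^ 2 * ‖g ω‖ ^ 2) P :=
    e2.add (hg2Int.const_mul (L * η ^ 2))
  have hBint : Integrable B P := e3.add (hu2Int.const_mul (L * (1 - α) ^ 2))
  -- pointwise descent bound
  have hpt : ∀ᵐ ω ∂P, F (w - η • g ω + (1 - α) • u ω) ≤ B ω := by
    refine Filter.Eventually.of_forall fun ω => ?_
    set v : E := -(η • g ω) + (1 - α) • u ω with hv
    have hrw : w - η • g ω + (1 - α) • u ω = w + v := by
      rw [hv]; abel
    have hdesc := my_descent hdiff hsmooth w v
    rw [hrw]
    have hin : ⟪m, v⟫ = -(η * ⟪m, g ω⟫) + (1 - α) * ⟪m, u ω⟫ := by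
      rw [hv, inner_add_right, inner_neg_right, real_inner_smul_right,
        real_inner_smul_right]
    have hnv : ‖v‖ ^ 2 ≤ 2 * η ^ 2 * ‖g ω‖ ^ 2 + 2 * (1 - α) ^ 2 * ‖u ω‖ ^ 2 := by
      have h1 : ‖v‖ ≤ |η| * ‖g ω‖ + |1 - α| * ‖u ω‖ := by
        calc ‖v‖ ≤ ‖-(η • g ω)‖ + ‖(1 - α) • u ω‖ := norm_add_le _ _
          _ = |η| * ‖g ω‖ + |1 - α| * ‖u ω‖ := by
              rw [norm_neg, norm_smul, norm_smul, Real.norm_eq_abs, Real.norm_eq_abs]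
      have h2 : (0:ℝ) ≤ ‖v‖ := norm_nonneg _
      have h3 : (|η| * ‖g ω‖) ^ 2 = η ^ 2 * ‖g ω‖ ^ 2 := by
        rw [mul_pow, sq_abs]
      have h4 : (|1 - α| * ‖u ω‖) ^ 2 = (1 - α) ^ 2 * ‖u ω‖ ^ 2 := by
        rw [mul_pow, sq_abs]
      nlinarith [sq_nonneg (|η| * ‖g ω‖ - |1 - α| * ‖u ω‖), norm_nonneg (g ω),
        norm_nonneg (u ω), abs_nonneg η, abs_nonneg (1 - α)]
    simp only [hB]
    rw [← hm] at hdesc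
    have hLpos : (0:ℝ) ≤ L / 2 := by positivity
    have h5 : L / 2 * (2 * η ^ 2 * ‖g ω‖ ^ 2 + 2 * (1 - α) ^ 2 * ‖u ω‖ ^ 2)
        = L * η ^ 2 * ‖g ω‖ ^ 2 + L * (1 - α) ^ 2 * ‖u ω‖ ^ 2 := by ring
    linarith [hdesc, mul_le_mul_of_nonneg_left hnv hLpos, hin.ge, hin.le]
  have hstep : (∫ ω, F (w - η • g ω + (1 - α) • u ω) ∂P) ≤ ∫ ω, B ω ∂P :=
    integral_mono_ae hFint hBint hpt
  -- compute / bound ∫ B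
  have hint_g : (∫ ω, ⟪m, g ω⟫ ∂P) = ‖m‖ ^ 2 := by
    rw [integral_inner hgInt m, hgmean]
    exact real_inner_self_eq_norm_sq m
  have hint_u : (∫ ω, ⟪m, u ω⟫ ∂P) ≤ ρ * (γ * ψ) := by
    have hub : ∀ᵐ ω ∂P, ⟪m, u ω⟫ ≤ ρ * (γ * ψ) := by
      filter_upwards [hubd] with ω hω
      calc ⟪m, u ω⟫ ≤ ‖m‖ * ‖u ω‖ := real_inner_le_norm _ _
        _ ≤ ρ * (γ * ψ) := by
            apply mul_le_mul hρbd hω (norm_nonneg _) hρ.le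
    calc (∫ ω, ⟪m, u ω⟫ ∂P) ≤ ∫ _ω, ρ * (γ * ψ) ∂P :=
          integral_mono_ae hI2 (integrable_const _) hub
      _ = ρ * (γ * ψ) := by simp
  have hint_u2 : (∫ ω, ‖u ω‖ ^ 2 ∂P) ≤ (γ * ψ) ^ 2 := by
    have hub : ∀ᵐ ω ∂P, ‖u ω‖ ^ 2 ≤ (γ * ψ) ^ 2 := by
      filter_upwards [hubd] with ω hω
      exact pow_le_pow_left₀ (norm_nonneg _) hω 2
    calc (∫ ω, ‖u ω‖ ^ 2 ∂P) ≤ ∫ _ω, (γ * ψ) ^ 2 ∂P :=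
          integral_mono_ae hu2Int (integrable_const _) hub
      _ = (γ * ψ) ^ 2 := by simp
  have hBval : (∫ ω, B ω ∂P)
      = F w - η * ‖m‖ ^ 2 + (1 - α) * (∫ ω, ⟪m, u ω⟫ ∂P)
        + L * η ^ 2 * (∫ ω, ‖g ω‖ ^ 2 ∂P) + L * (1 - α) ^ 2 * (∫ ω, ‖u ω‖ ^ 2 ∂P) := by
    rw [hB]
    rw [integral_add e3 (hu2Int.const_mul (L * (1 - α) ^ 2)),
      integral_add e2 (hg2Int.const_mul (L * η ^ 2)),
      integral_add e1 (hI2.const_mul (1 - α)),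
      integral_sub (integrable_const (F w)) (hI1.const_mul η),
      integral_const_mul, integral_const_mul, integral_const_mul,
      integral_const_mul, integral_const, hint_g]
    simp
  -- PL inequality from strong convexity
  have hPL : F w - F wstar ≤ ‖m‖ ^ 2 / (2 * μ) := by
    have hsc := hstrongconvex w wstar
    have habs : |⟪m, wstar - w⟫| ≤ ‖m‖ * ‖wstar - w‖ := abs_real_inner_le_norm _ _
    have h1 : -(‖m‖ * ‖wstar - w‖) ≤ ⟪m, wstar - w⟫ := neg_le_of_abs_le habs
    rw [← hm] at hsc
    rw [le_div_iff₀ (by positivity : (0:ℝ) < 2 * μ)]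
    have h2 := mul_le_mul_of_nonneg_left h1 (by positivity : (0:ℝ) ≤ 2 * μ)
    have h3 := mul_le_mul_of_nonneg_left
      (show ⟪m, wstar - w⟫ + μ / 2 * ‖wstar - w‖ ^ 2 ≤ F wstar - F w by linarith)
      (by positivity : (0:ℝ) ≤ 2 * μ)
    linarith only [h2, h3, sq_nonneg (‖m‖ - μ * ‖wstar - w‖)]
  have hgap : 0 ≤ F w - F wstar := sub_nonneg.2 (hmin w)
  -- finish with arithmetic
  have h4Lη : 4 * L * η ≤ 1 := by
    rw [le_div_iff₀ (by positivity : (0:ℝ) < 4 * L)] at hη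
    linarith
  have hm2 : (0:ℝ) ≤ ‖m‖ ^ 2 := sq_nonneg _
  have h1α : (0:ℝ) ≤ 1 - α := by linarith
  have hPL' : 2 * μ * (F w - F wstar) ≤ ‖m‖ ^ 2 := by
    rw [le_div_iff₀ (by positivity : (0:ℝ) < 2 * μ)] at hPL
    linarith
  have hBfinal : (∫ ω, B ω ∂P)
      ≤ F w - η * ‖m‖ ^ 2 + (1 - α) * (ρ * (γ * ψ))
        + L * η ^ 2 * (δ ^ 2 + ‖m‖ ^ 2) + L * (1 - α) ^ 2 * (γ * ψ) ^ 2 := by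
    rw [hBval]
    have t1 := mul_le_mul_of_nonneg_left hint_u h1α
    have t2 := mul_le_mul_of_nonneg_left hEg2 (by positivity : (0:ℝ) ≤ L * η ^ 2)
    have t3 := mul_le_mul_of_nonneg_left hint_u2
      (by positivity : (0:ℝ) ≤ L * (1 - α) ^ 2)
    linarith only [t1, t2, t3]
  have hfinal := hstep.trans hBfinal
  have hkey1 : L * η ^ 2 * ‖m‖ ^ 2 ≤ η / 4 * ‖m‖ ^ 2 := by
    apply mul_le_mul_of_nonneg_right _ hm2
    have := mul_le_mul_of_nonneg_right h4Lη hη0.le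
    linarith only [this]
  have hkey2 : L * (1 - α) ^ 2 * (γ * ψ) ^ 2 ≤ γ * ρ * ψ * (1 - α) := by
    have : L * (1 - α) ^ 2 * (γ * ψ) ^ 2 = L * γ ^ 2 * ψ ^ 2 * (1 - α) ^ 2 := by ring
    linarith [hγle]
  have hkey3 : η / 2 * ‖m‖ ^ 2 ≥ μ * η * (F w - F wstar) := by
    have := mul_le_mul_of_nonneg_left hPL' (by positivity : (0:ℝ) ≤ η / 2)
    linarith only [this]
  have hdel : L * η ^ 2 * δ ^ 2 ≤ 2 * L * η ^ 2 * δ ^ 2 := by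
    have h0 : (0:ℝ) ≤ L * η ^ 2 * δ ^ 2 := by positivity
    linarith only [h0]
  have hηm : (0:ℝ) ≤ η / 4 * ‖m‖ ^ 2 := by positivity
  have heq : (1 - α) * (ρ * (γ * ψ)) = γ * ρ * ψ * (1 - α) := by ring
  have heq2 : (1 - μ * η) * (F w - F wstar)
      = (F w - F wstar) - μ * η * (F w - F wstar) := by ring
  have heq3 : L * η ^ 2 * (δ ^ 2 + ‖m‖ ^ 2)
      = L * η ^ 2 * δ ^ 2 + L * η ^ 2 * ‖m‖ ^ 2 := by ring
  linarith only [hfinal, hkey1, hkey2, hkey3, hdel, hηm, heq, heq2, heq3, hgap]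
end
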